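/- There exists a two-period tree-constrained MDP in which every optimal tree policy is history-dependent: with initial states s_1, s'_1 (each with probability 1/2), one action a_1 at period 1 with zero cost, second-period states s_2, s_3, s_4 all in the same tree class, transitions P(s_3 | s_1,a_1)=0.9, P(s_2 | s_1,a_1)=0.1, P(s_4 | s'_1,a_1)=0.9, P(s_2 | s'_1,a_1)=0.1, two period-2 actions with costs c(s_2,a_2)=c(s_2,a_3)=0, c(s_3,a_2)=10, c(s_3,a_3)=0, c(s_4,a_2)=0, c(s_4,a_3)=10, the history-dependent policy choosing a_3 after s_1 and a_2 after s'_1 achieves cost 0, while every Markovian tree policy (choosing a single second-period action distribution independent of the first state) incurs strictly positive expected cost. -/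
import Mathlib


/-- Second-period costs: states `s₂,s₃,s₄` (indices 0,1,2), actions `a₂,a₃` (indices 0,1):
`c(s₂,·)=0, c(s₃,a₂)=10, c(s₃,a₃)=0, c(s₄,a₂)=0, c(s₄,a₃)=10`. -/
def exCost2 : Fin 3 → Fin 2 → ℝ := ![![0, 0], ![10, 0], ![0, 10]]

/-- Transitions from the first-period states `s₁, s'₁` (indices 0,1):
`P(s₂|s₁)=0.1, P(s₃|s₁)=0.9, P(s₂|s'₁)=0.1, P(s₄|s'₁)=0.9`. -/
def exTrans2 : Fin 2 → Fin 3 → ℝ := ![![0.1, 0.9, 0], ![0.1, 0, 0.9]]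

/-- Expected cost of a Markovian tree policy using distribution `μ` over second-period
actions at all second-period states (first period has a single zero-cost action and
uniform initial distribution over `s₁, s'₁`). -/
noncomputable def markovCost2 (μ : Fin 2 → ℝ) : ℝ :=
  ∑ s1 : Fin 2, (1 / 2) * ∑ s2 : Fin 3, exTrans2 s1 s2 * ∑ a, μ a * exCost2 s2 a

/-- Expected cost of a history-dependent tree policy using distribution `σ s1` over
second-period actions after first-period state `s1`. -/
noncomputable def histCost2 (σ : Fin 2 → Fin 2 → ℝ) : ℝ :=
  ∑ s1 : Fin 2, (1 / 2) * ∑ s2 : Fin 3, exTrans2 s1 s2 * ∑ a, σ s1 a * exCost2 s2 a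

/-- In this two-period tree-constrained MDP, the history-dependent tree
policy choosing `a₃` after `s₁` and `a₂` after `s'₁` achieves expected cost 0, while
every Markovian tree policy incurs strictly positive expected cost. -/
theorem history_dependent_tree_policy_needed :
    (∃ σ : Fin 2 → Fin 2 → ℝ,
      (∀ s a, 0 ≤ σ s a) ∧ (∀ s, ∑ a, σ s a = 1) ∧
      (σ 0 = fun a => if a = (1 : Fin 2) then (1 : ℝ) else 0) ∧
      (σ 1 = fun a => if a = (0 : Fin 2) then (1 : ℝ) else 0) ∧
      histCost2 σ = 0) ∧
    (∀ μ : Fin 2 → ℝ, (∀ a, 0 ≤ μ a) → (∑ a, μ a = 1) → 0 < markovCost2 μ) := by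

  constructor
  · refine ⟨fun s1 => if s1 = 0 then (fun a => if a = (1 : Fin 2) then (1:ℝ) else 0)
      else (fun a => if a = (0 : Fin 2) then (1:ℝ) else 0), ?_, ?_, ?_, ?_, ?_⟩
    · intro s a; fin_cases s <;> fin_cases a <;> simp
    · intro s; fin_cases s <;> simp [Fin.sum_univ_two]
    · simp
    · simp
    · simp [histCost2, exTrans2, exCost2, Fin.sum_univ_two, Fin.sum_univ_three]
  · intro μ hpos hsum
    have h0 := hpos 0
    have h1 := hpos 1
    rw [Fin.sum_univ_two] at hsum
    have : markovCost2 μ = 4.5 * (μ 0 + μ 1) := by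
      simp [markovCost2, exTrans2, exCost2, Fin.sum_univ_two, Fin.sum_univ_three]
      ring
    rw [this, hsum]
    norm_num
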